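/- arXiv:1509.02485 — 3 statements merged into one kernel-verified Lean document; each statement's English description precedes it below -/
import Mathlib

section
/- Let G = (V,E) be a finite simple graph and ≺ a linear order on V. Then COL≺(G) = STAB(R≺(G)), i.e., the convex hull in ℝ^A of the representative vectors of all proper colorings of G equals the convex hull of the characteristic vectors of the independent sets of the Cornaz–Jost graph R≺(G). -/
open scoped Classical

/-- `(u, v)` is an arc of `G` w.r.t. the order `lt`: `u ≺ v` and `uv ∉ E`. -/
abbrev IsArcPair {V : Type*} (G : SimpleGraph V) (lt : V → V → Prop) (p : V × V) : Prop :=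
  lt p.1 p.2 ∧ ¬ G.Adj p.1 p.2

/-- The set of arcs of `G` (ordered non-edges), as a type. -/
abbrev Arc {V : Type*} (G : SimpleGraph V) (lt : V → V → Prop) : Type _ :=
  {p : V × V // IsArcPair G lt p}

/-- A proper coloring of a graph, as a color function. -/
def ProperColoring {W : Type*} (H : SimpleGraph W) (c : W → ℕ) : Prop :=
  ∀ u v, H.Adj u v → c u ≠ c v

/-- `u` is the `lt`-least element of its color class under `c`. -/
def IsClassRep {V : Type*} (lt : V → V → Prop) (c : V → ℕ) (u : V) : Prop :=
  ∀ w, c w = c u → u = w ∨ lt u w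

/-- The representative vector of a coloring `c`: `x (u,v) = 1` iff `u` and `v` have the
same color and `u` is the `lt`-least element of that color class. -/
noncomputable def repVec {V : Type*} (G : SimpleGraph V) (lt : V → V → Prop) (c : V → ℕ) :
    Arc G lt → ℝ := fun a =>
  if c a.1.1 = c a.1.2 ∧ IsClassRep lt c a.1.1 then 1 else 0

/-- The coloring polytope: convex hull of representative vectors of proper colorings. -/
noncomputable def COL {V : Type*} (G : SimpleGraph V) (lt : V → V → Prop) :
    Set (Arc G lt → ℝ) :=
  convexHull ℝ {x | ∃ c : V → ℕ, ProperColoring G c ∧ x = repVec G lt c}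

/-- A stable (independent) set of a graph. -/
def IsStableSet {W : Type*} (H : SimpleGraph W) (s : Set W) : Prop :=
  ∀ a ∈ s, ∀ b ∈ s, ¬ H.Adj a b

/-- The stable set polytope of a graph. -/
noncomputable def STAB {W : Type*} (H : SimpleGraph W) : Set (W → ℝ) :=
  convexHull ℝ {x | ∃ s : Set W, IsStableSet H s ∧ x = s.indicator 1}

/-- The Cornaz–Jost graph `R≺(G)`: vertices are the arcs of `G`; two distinct arcs
`(a,b)` and `(c,d)` are adjacent iff they share an endpoint and it is not the case that
`a = c` and `bd ∉ E`. -/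
def RGraph {V : Type*} (G : SimpleGraph V) (lt : V → V → Prop) : SimpleGraph (Arc G lt) where
  Adj p q := p ≠ q ∧
    (p.1.1 = q.1.1 ∨ p.1.1 = q.1.2 ∨ p.1.2 = q.1.1 ∨ p.1.2 = q.1.2) ∧
    ¬ (p.1.1 = q.1.1 ∧ ¬ G.Adj p.1.2 q.1.2)
  symm := by
    constructor
    rintro p q ⟨h1, h2, h3⟩
    refine ⟨h1.symm, ?_, fun hc => h3 ⟨hc.1.symm, fun h => hc.2 h.symm⟩⟩
    rcases h2 with h | h | h | h
    · exact Or.inl h.symm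
    · exact Or.inr (Or.inr (Or.inl h.symm))
    · exact Or.inr (Or.inl h.symm)
    · exact Or.inr (Or.inr (Or.inr h.symm))
  loopless := ⟨fun p h => h.1 rfl⟩

/-- The line graph of the complement of `G`, with the edges of the complement
identified with the arcs of `G`: two distinct arcs are adjacent iff they share an endpoint. -/
def lineGraphArc {V : Type*} (G : SimpleGraph V) (lt : V → V → Prop) :
    SimpleGraph (Arc G lt) where
  Adj p q := p ≠ q ∧
    (p.1.1 = q.1.1 ∨ p.1.1 = q.1.2 ∨ p.1.2 = q.1.1 ∨ p.1.2 = q.1.2)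
  symm := by
    constructor
    rintro p q ⟨h1, h2⟩
    refine ⟨h1.symm, ?_⟩
    rcases h2 with h | h | h | h
    · exact Or.inl h.symm
    · exact Or.inr (Or.inr (Or.inl h.symm))
    · exact Or.inr (Or.inl h.symm)
    · exact Or.inr (Or.inr (Or.inr h.symm))
  loopless := ⟨fun p h => h.1 rfl⟩

/-- The independence number of `H` is at most 2. -/
def AlphaLeTwo {W : Type*} (H : SimpleGraph W) : Prop :=
  ∀ s : Set W, IsStableSet H s → s.ncard ≤ 2

/-- The chromatic number of a graph, as a natural number. -/
noncomputable def chromNum {W : Type*} (H : SimpleGraph W) : ℕ :=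
  sInf {n : ℕ | ∃ c : W → ℕ, ProperColoring H c ∧ ∀ v, c v < n}

/-- `H` contains a copy of `F` as a (not necessarily induced) subgraph. -/
def ContainsCopy {α β : Type*} (F : SimpleGraph α) (H : SimpleGraph β) : Prop :=
  ∃ f : α → β, Function.Injective f ∧ ∀ a b, F.Adj a b → H.Adj (f a) (f b)

/-- `H` contains an induced copy of `F`. -/
def ContainsInducedCopy {α β : Type*} (F : SimpleGraph α) (H : SimpleGraph β) : Prop :=
  ∃ f : α → β, Function.Injective f ∧ ∀ a b, H.Adj (f a) (f b) ↔ F.Adj a b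

/-- The paw: a triangle `{0,1,2}` plus the vertex `3` adjacent only to `2`. -/
def pawGraph : SimpleGraph (Fin 4) :=
  SimpleGraph.fromEdgeSet {s(0, 1), s(0, 2), s(1, 2), s(2, 3)}

/-- The kite: the paw plus the vertex `4` adjacent only to `3` (the paw's degree-1 vertex). -/
def kiteGraph : SimpleGraph (Fin 5) :=
  SimpleGraph.fromEdgeSet {s(0, 1), s(0, 2), s(1, 2), s(2, 3), s(3, 4)}

/-- The claw `K_{1,3}`: vertex `0` adjacent to `1`, `2`, `3`. -/
def clawGraph : SimpleGraph (Fin 4) :=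
  SimpleGraph.fromEdgeSet {s(0, 1), s(0, 2), s(0, 3)}

/-- A graph is claw-free if it has no induced copy of `K_{1,3}`. -/
def ClawFree {W : Type*} (H : SimpleGraph W) : Prop :=
  ¬ ContainsInducedCopy clawGraph H

/-- A graph is quasi-line if the neighborhood of every vertex can be partitioned
into two cliques. -/
def QuasiLine {W : Type*} (H : SimpleGraph W) : Prop :=
  ∀ v : W, ∃ K₁ K₂ : Set W, Disjoint K₁ K₂ ∧ K₁ ∪ K₂ = {w | H.Adj v w} ∧
    H.IsClique K₁ ∧ H.IsClique K₂

/-- A graph is hypomatchable if deleting any vertex leaves a graph with a perfect matching. -/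
def Hypomatchable {W : Type*} (H : SimpleGraph W) : Prop :=
  ∀ u : W, ∃ M : (H.induce {v | v ≠ u}).Subgraph, M.IsPerfectMatching

/-- A graph is 2-connected: connected, at least 3 vertices, and deleting any vertex
leaves it connected. -/
def TwoConnected {W : Type*} [Fintype W] (H : SimpleGraph W) : Prop :=
  H.Connected ∧ 3 ≤ Fintype.card W ∧ ∀ u : W, (H.induce {v | v ≠ u}).Connected

/-- A set of arcs is a matching of the complement of `G`: no two distinct arcs share
an endpoint. -/
def IsMatchingArcSet {V : Type*} (G : SimpleGraph V) (lt : V → V → Prop)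
    (m : Set (Arc G lt)) : Prop :=
  ∀ p ∈ m, ∀ q ∈ m, p ≠ q →
    ¬ (p.1.1 = q.1.1 ∨ p.1.1 = q.1.2 ∨ p.1.2 = q.1.1 ∨ p.1.2 = q.1.2)

/-- The matching polytope of the complement of `G`, viewed in `ℝ^A` via the
identification of edges of the complement with arcs. -/
noncomputable def MATCHarcs {V : Type*} (G : SimpleGraph V) (lt : V → V → Prop) :
    Set (Arc G lt → ℝ) :=
  convexHull ℝ {x | ∃ m : Set (Arc G lt), IsMatchingArcSet G lt m ∧ x = m.indicator 1}

/-- Restriction of a vector indexed by arcs of `G` to the arcs of an induced subgraph. -/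
def restrictVec {V : Type*} (G : SimpleGraph V) (lt : V → V → Prop) (W : Set V)
    (x : Arc G lt → ℝ) : Arc (G.induce W) (fun a b => lt ↑a ↑b) → ℝ :=
  fun a => x ⟨(↑a.1.1, ↑a.1.2), a.2.1, a.2.2⟩

section CJaux

variable {V : Type*} [Fintype V] [DecidableEq V] (G : SimpleGraph V) [DecidableRel G.Adj]
  (lt : V → V → Prop) [DecidableRel lt]

lemma cj_share {s : Set (Arc G lt)} (hs : IsStableSet (RGraph G lt) s)
    {p q : Arc G lt} (hp : p ∈ s) (hq : q ∈ s) (hne : p ≠ q)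
    (hsh : p.1.1 = q.1.1 ∨ p.1.1 = q.1.2 ∨ p.1.2 = q.1.1 ∨ p.1.2 = q.1.2) :
    p.1.1 = q.1.1 ∧ ¬ G.Adj p.1.2 q.1.2 := by
  by_contra h
  exact hs p hp q hq (show p ≠ q ∧ _ from ⟨hne, hsh, h⟩)

lemma cj_asym (hlt : IsStrictTotalOrder V lt) {a b : V} (h1 : lt a b) (h2 : lt b a) : False :=
  hlt.irrefl a (hlt.trans a b a h1 h2)

lemma cj_head_unique (hlt : IsStrictTotalOrder V lt) {s : Set (Arc G lt)}
    (hs : IsStableSet (RGraph G lt) s) {p q : Arc G lt} (hp : p ∈ s) (hq : q ∈ s)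
    (h : p.1.2 = q.1.2) : p = q := by
  by_contra hne
  obtain ⟨h1, _⟩ := cj_share G lt hs hp hq hne (Or.inr (Or.inr (Or.inr h)))
  exact hne (Subtype.ext (Prod.ext h1 h))

lemma cj_not_tail_head (hlt : IsStrictTotalOrder V lt) {s : Set (Arc G lt)}
    (hs : IsStableSet (RGraph G lt) s) {p q : Arc G lt} (hp : p ∈ s) (hq : q ∈ s)
    (h : p.1.2 = q.1.1) : False := by
  by_cases hpq : p = q
  · subst hpq
    exact hlt.irrefl _ (h ▸ p.2.1)
  · obtain ⟨h1, _⟩ := cj_share G lt hs hp hq hpq (Or.inr (Or.inr (Or.inl h)))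
    exact hlt.irrefl _ ((h1.trans h.symm) ▸ p.2.1)

lemma coloring_to_stable (hlt : IsStrictTotalOrder V lt) {c : V → ℕ}
    (hc : ProperColoring G c) :
    IsStableSet (RGraph G lt) {a : Arc G lt | c a.1.1 = c a.1.2 ∧ IsClassRep lt c a.1.1} := by
  rintro p ⟨hp1, hp2⟩ q ⟨hq1, hq2⟩ hadj0
  obtain ⟨hne, hsh, hne2⟩ := (hadj0 : p ≠ q ∧ _ ∧ _)
  by_cases htl : p.1.1 = q.1.1
  · refine hne2 ⟨htl, fun hadj => ?_⟩
    exact hc _ _ hadj (hp1.symm.trans ((congrArg c htl).trans hq1))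
  · have hcc : c p.1.1 ≠ c q.1.1 := by
      intro h
      rcases hp2 q.1.1 h.symm with h1 | h1
      · exact htl h1
      · rcases hq2 p.1.1 h with h2 | h2
        · exact htl h2.symm
        · exact cj_asym lt hlt h1 h2
    rcases hsh with h | h | h | h
    · exact htl h
    · exact hcc ((congrArg c h).trans hq1.symm)
    · exact hcc (hp1.trans (congrArg c h))
    · exact hcc (hp1.trans ((congrArg c h).trans hq1.symm))

lemma stable_to_coloring (hlt : IsStrictTotalOrder V lt) {s : Set (Arc G lt)}
    (hs : IsStableSet (RGraph G lt) s) :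
    ∃ c : V → ℕ, ProperColoring G c ∧
      ∀ a : Arc G lt, (c a.1.1 = c a.1.2 ∧ IsClassRep lt c a.1.1) ↔ a ∈ s := by
  classical
  set r : V → V := fun v =>
    if h : ∃ a : Arc G lt, a ∈ s ∧ a.1.2 = v then h.choose.1.1 else v with hr_def
  have hr_head : ∀ a ∈ s, r a.1.2 = a.1.1 := by
    intro a ha
    have hex : ∃ b : Arc G lt, b ∈ s ∧ b.1.2 = a.1.2 := ⟨a, ha, rfl⟩
    have : r a.1.2 = hex.choose.1.1 := by
      simp only [hr_def]
      rw [dif_pos hex]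
    rw [this]
    obtain ⟨hb1, hb2⟩ := hex.choose_spec
    rw [cj_head_unique G lt hlt hs hb1 ha hb2]
  have hr_tail : ∀ a ∈ s, r a.1.1 = a.1.1 := by
    intro a ha
    have hnex : ¬ ∃ b : Arc G lt, b ∈ s ∧ b.1.2 = a.1.1 := by
      rintro ⟨b, hb, hb2⟩
      exact cj_not_tail_head G lt hlt hs hb ha hb2
    simp only [hr_def]
    rw [dif_neg hnex]
  have hr_cases : ∀ v : V, r v = v ∨ ∃ a : Arc G lt, a ∈ s ∧ a.1.2 = v ∧ a.1.1 = r v := by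
    intro v
    by_cases hex : ∃ a : Arc G lt, a ∈ s ∧ a.1.2 = v
    · right
      refine ⟨hex.choose, hex.choose_spec.1, hex.choose_spec.2, ?_⟩
      simp only [hr_def]
      rw [dif_pos hex]
    · left
      simp only [hr_def]
      rw [dif_neg hex]
  set e : V → ℕ := fun v => ((Fintype.equivFin V) v : ℕ) with he_def
  have he : Function.Injective e := fun a b h =>
    (Fintype.equivFin V).injective (Fin.val_injective h)
  refine ⟨fun v => e (r v), ?_, ?_⟩
  · intro u v hadj heq
    have hr : r u = r v := he heq
    rcases hr_cases u with hu | ⟨a, ha, ha2, ha1⟩ <;>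
      rcases hr_cases v with hv | ⟨b, hb, hb2, hb1⟩
    · exact G.loopless.irrefl v (by rw [show u = v from by rw [← hu, hr, hv]] at hadj; exact hadj)
    · refine b.2.2 ?_
      rw [hb2, show b.1.1 = u from by rw [hb1, ← hr, hu]]
      exact hadj
    · refine a.2.2 ?_
      rw [ha2, show a.1.1 = v from by rw [ha1, hr, hv]]
      exact hadj.symm
    · by_cases hab : a = b
      · exact G.loopless.irrefl v (by rw [show u = v from by rw [← ha2, hab, hb2]] at hadj; exact hadj)
      · obtain ⟨_, hnadj⟩ := cj_share G lt hs ha hb hab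
          (Or.inl (by rw [ha1, hr, ← hb1]))
        rw [ha2, hb2] at hnadj
        exact hnadj hadj
  · intro a
    constructor
    · rintro ⟨h1, h2⟩
      have hr : r a.1.1 = r a.1.2 := he h1
      have hru : r a.1.1 = a.1.1 := by
        rcases hr_cases a.1.1 with h | ⟨b, hb, hb2, hb1⟩
        · exact h
        · exfalso
          have hcb : e (r b.1.1) = e (r a.1.1) := by
            rw [hr_tail b hb, hb1]
          rcases h2 b.1.1 hcb with h | h
          · have hb := b.2.1
            rw [hb2, ← h] at hb
            exact hlt.irrefl _ hb
          · exact cj_asym lt hlt h (hb2 ▸ b.2.1)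
      have hrv : r a.1.2 = a.1.1 := by rw [← hr, hru]
      rcases hr_cases a.1.2 with h | ⟨b, hb, hb2, hb1⟩
      · exact absurd ((h.symm.trans hrv) ▸ a.2.1) (hlt.irrefl _)
      · have hb1' : b.1.1 = a.1.1 := by rw [hb1, hrv]
        have : b = a := Subtype.ext (Prod.ext hb1' hb2)
        rwa [← this]
    · intro ha
      refine ⟨by show e (r (a.1.1)) = e (r (a.1.2)); rw [hr_tail a ha, hr_head a ha], fun w hw => ?_⟩
      have hrw : r w = a.1.1 := by
        have := he hw
        rwa [hr_tail a ha] at this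
      rcases hr_cases w with h | ⟨b, hb, hb2, hb1⟩
      · exact Or.inl (by rw [← hrw, h])
      · refine Or.inr ?_
        have : lt b.1.1 b.1.2 := b.2.1
        rwa [hb2, hb1, hrw] at this

end CJaux

/-- `COL≺(G) = STAB(R≺(G))`. -/
theorem statement1 {V : Type*} [Fintype V] [DecidableEq V]
    (G : SimpleGraph V) [DecidableRel G.Adj]
    (lt : V → V → Prop) [DecidableRel lt] (hlt : IsStrictTotalOrder V lt) :
    COL G lt = STAB (RGraph G lt) := by
  unfold COL STAB
  congr 1
  ext x
  constructor
  · rintro ⟨c, hc, rfl⟩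
    refine ⟨_, coloring_to_stable G lt hlt hc, ?_⟩
    funext a
    by_cases h : c a.1.1 = c a.1.2 ∧ IsClassRep lt c a.1.1 <;>
      simp [repVec, Set.indicator, h]
  · rintro ⟨s, hs, rfl⟩
    obtain ⟨c, hc, hiff⟩ := stable_to_coloring G lt hlt hs
    refine ⟨c, hc, ?_⟩
    funext a
    by_cases h : a ∈ s
    · simp [repVec, Set.indicator, h, (hiff a).mpr h]
    · have : ¬ (c a.1.1 = c a.1.2 ∧ IsClassRep lt c a.1.1) := fun hh => h ((hiff a).mp hh)
      simp [repVec, Set.indicator, h, this]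
end

section
/- Let G = (V,E) be a finite simple graph whose vertex set is partitioned as V = V₁ ∪ V₂ with every vertex of V₁ adjacent to every vertex of V₂ (so G is the complete join of G₁ = G[V₁] and G₂ = G[V₂]), and let ≺ be a linear order on V with restrictions ≺₁ and ≺₂ to V₁ and V₂. Then every arc of G has both endpoints in V₁ or both in V₂, and under the resulting identification ℝ^A ≅ ℝ^{A₁} × ℝ^{A₂} one has COL≺(G) = COL≺₁(G₁) × COL≺₂(G₂). -/
open scoped Classical

section Aux

variable {V : Type*}

lemma rep_restrict_iff (lt : V → V → Prop) (W : Set V) (c : V → ℕ) (u : W)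
    (hclass : ∀ w : V, c w = c ↑u → w ∈ W) :
    IsClassRep lt c ↑u ↔ IsClassRep (fun a b : W => lt ↑a ↑b) (fun v : W => c ↑v) u := by
  constructor
  · intro h w hw
    rcases h ↑w hw with h' | h'
    · exact Or.inl (Subtype.ext h')
    · exact Or.inr h'
  · intro h w hw
    rcases h ⟨w, hclass w hw⟩ hw with h' | h'
    · exact Or.inl (congrArg Subtype.val h')
    · exact Or.inr h'

lemma restrict_repVec (G : SimpleGraph V) (lt : V → V → Prop) (W : Set V)
    (c : V → ℕ) (hclass : ∀ u : W, ∀ w : V, c w = c ↑u → w ∈ W) :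
    restrictVec G lt W (repVec G lt c)
      = repVec (G.induce W) (fun a b => lt ↑a ↑b) (fun v : W => c ↑v) := by
  funext a
  show (if c ↑a.1.1 = c ↑a.1.2 ∧ IsClassRep lt c ↑a.1.1 then (1:ℝ) else 0) = _
  exact if_congr (and_congr Iff.rfl (rep_restrict_iff lt W c a.1.1 (hclass a.1.1))) rfl rfl

lemma repVec_congr (H : SimpleGraph V) (lt : V → V → Prop) (c c' : V → ℕ)
    (h : ∀ u v, c u = c v ↔ c' u = c' v) : repVec H lt c = repVec H lt c' := by
  funext a
  unfold repVec
  refine if_congr (and_congr (h _ _) ?_) rfl rfl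
  unfold IsClassRep
  exact forall_congr' fun w => imp_congr (h _ _) Iff.rfl

/-- The identification map `ℝ^A → ℝ^{A₁} × ℝ^{A₂}` as a linear map. -/
noncomputable def PhiMap (G : SimpleGraph V) (lt : V → V → Prop) (V₁ V₂ : Set V) :
    (Arc G lt → ℝ) →ₗ[ℝ]
      ((Arc (G.induce V₁) (fun a b : V₁ => lt ↑a ↑b) → ℝ) ×
       (Arc (G.induce V₂) (fun a b : V₂ => lt ↑a ↑b) → ℝ)) where
  toFun x := (restrictVec G lt V₁ x, restrictVec G lt V₂ x)
  map_add' _ _ := rfl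
  map_smul' _ _ := rfl

end Aux

/-- if `G` is the complete join of `G[V₁]` and `G[V₂]`, then every arc of `G`
lies within `V₁` or within `V₂`, and `COL≺(G) = COL≺₁(G₁) × COL≺₂(G₂)` under the resulting
identification. -/
theorem statement12 {V : Type*} [Fintype V] [DecidableEq V]
    (G : SimpleGraph V) [DecidableRel G.Adj]
    (lt : V → V → Prop) [DecidableRel lt] (hlt : IsStrictTotalOrder V lt)
    (V₁ V₂ : Set V) (hdisj : Disjoint V₁ V₂) (hunion : V₁ ∪ V₂ = Set.univ)
    (hjoin : ∀ a ∈ V₁, ∀ b ∈ V₂, G.Adj a b) :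
    (∀ a : Arc G lt, (a.1.1 ∈ V₁ ∧ a.1.2 ∈ V₁) ∨ (a.1.1 ∈ V₂ ∧ a.1.2 ∈ V₂)) ∧
    (∀ x : Arc G lt → ℝ,
      x ∈ COL G lt ↔
        restrictVec G lt V₁ x ∈ COL (G.induce V₁) (fun a b => lt ↑a ↑b) ∧
        restrictVec G lt V₂ x ∈ COL (G.induce V₂) (fun a b => lt ↑a ↑b)) := by
  -- membership helpers
  have hmem2 : ∀ v : V, v ∉ V₁ → v ∈ V₂ := fun v h =>
    ((Set.mem_union v V₁ V₂).1 (hunion ▸ Set.mem_univ v)).resolve_left h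
  have hmem1 : ∀ v : V, v ∉ V₂ → v ∈ V₁ := fun v h =>
    ((Set.mem_union v V₁ V₂).1 (hunion ▸ Set.mem_univ v)).resolve_right h
  -- Part 1
  have part1 : ∀ a : Arc G lt, (a.1.1 ∈ V₁ ∧ a.1.2 ∈ V₁) ∨ (a.1.1 ∈ V₂ ∧ a.1.2 ∈ V₂) := by
    intro a
    by_cases h1 : a.1.1 ∈ V₁ <;> by_cases h2 : a.1.2 ∈ V₁
    · exact Or.inl ⟨h1, h2⟩
    · exact absurd (hjoin _ h1 _ (hmem2 _ h2)) a.2.2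
    · exact absurd ((hjoin _ h2 _ (hmem2 _ h1)).symm) a.2.2
    · exact Or.inr ⟨hmem2 _ h1, hmem2 _ h2⟩
  refine ⟨part1, fun x => ?_⟩
  -- class containment for proper colorings of the join
  have hclass₁ : ∀ c : V → ℕ, ProperColoring G c → ∀ u : V₁, ∀ w : V, c w = c ↑u → w ∈ V₁ := by
    intro c hc u w hw
    by_contra hwn
    exact hc ↑u w (hjoin ↑u u.2 w (hmem2 w hwn)) hw.symm
  have hclass₂ : ∀ c : V → ℕ, ProperColoring G c → ∀ u : V₂, ∀ w : V, c w = c ↑u → w ∈ V₂ := by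
    intro c hc u w hw
    by_contra hwn
    exact hc w ↑u (hjoin w (hmem1 w hwn) ↑u u.2) hw
  set Φ := PhiMap G lt V₁ V₂ with hΦ
  -- injectivity of Φ
  have hinj : Function.Injective Φ := by
    intro y z hyz
    have h1 := congrArg Prod.fst hyz
    have h2 := congrArg Prod.snd hyz
    funext a
    rcases part1 a with ⟨hu, hv⟩ | ⟨hu, hv⟩
    · exact congrFun h1 ⟨(⟨a.1.1, hu⟩, ⟨a.1.2, hv⟩), a.2.1, a.2.2⟩
    · exact congrFun h2 ⟨(⟨a.1.1, hu⟩, ⟨a.1.2, hv⟩), a.2.1, a.2.2⟩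
  -- image of the vertex set
  have himg : Φ '' {y | ∃ c : V → ℕ, ProperColoring G c ∧ y = repVec G lt c} =
      {y | ∃ c, ProperColoring (G.induce V₁) c ∧
        y = repVec (G.induce V₁) (fun a b => lt ↑a ↑b) c} ×ˢ
      {y | ∃ c, ProperColoring (G.induce V₂) c ∧
        y = repVec (G.induce V₂) (fun a b => lt ↑a ↑b) c} := by
    apply Set.Subset.antisymm
    · rintro p ⟨y, ⟨c, hc, rfl⟩, rfl⟩
      constructor
      · exact ⟨fun v => c ↑v, fun u v h => hc ↑u ↑v h,
          restrict_repVec G lt V₁ c (hclass₁ c hc)⟩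
      · exact ⟨fun v => c ↑v, fun u v h => hc ↑u ↑v h,
          restrict_repVec G lt V₂ c (hclass₂ c hc)⟩
    · rintro ⟨y₁, y₂⟩ ⟨⟨c₁, hc₁, rfl⟩, ⟨c₂, hc₂, rfl⟩⟩
      classical
      set e : V → ℕ := fun v =>
        if h : v ∈ V₁ then 2 * c₁ ⟨v, h⟩ else 2 * c₂ ⟨v, hmem2 v h⟩ + 1 with he_def
      have he1 : ∀ u : V₁, e ↑u = 2 * c₁ u := by
        intro u
        simp only [he_def, dif_pos u.2]
      have he2 : ∀ u : V₂, e ↑u = 2 * c₂ u + 1 := by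
        intro u
        have hn : (↑u : V) ∉ V₁ := fun h => hdisj.ne_of_mem h u.2 rfl
        simp only [he_def, dif_neg hn]
      have he : ProperColoring G e := by
        intro u v huv
        by_cases h1 : u ∈ V₁ <;> by_cases h2 : v ∈ V₁
        · have := hc₁ ⟨u, h1⟩ ⟨v, h2⟩ huv
          rw [he1 ⟨u, h1⟩, he1 ⟨v, h2⟩]
          omega
        · rw [he1 ⟨u, h1⟩, he2 ⟨v, hmem2 v h2⟩]
          omega
        · rw [he2 ⟨u, hmem2 u h1⟩, he1 ⟨v, h2⟩]
          omega
        · have := hc₂ ⟨u, hmem2 u h1⟩ ⟨v, hmem2 v h2⟩ huv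
          rw [he2 ⟨u, hmem2 u h1⟩, he2 ⟨v, hmem2 v h2⟩]
          omega
      refine ⟨repVec G lt e, ⟨e, he, rfl⟩, Prod.ext ?_ ?_⟩
      · show restrictVec G lt V₁ (repVec G lt e) = _
        rw [restrict_repVec G lt V₁ e (hclass₁ e he)]
        apply repVec_congr
        intro u v
        rw [he1 u, he1 v]
        omega
      · show restrictVec G lt V₂ (repVec G lt e) = _
        rw [restrict_repVec G lt V₂ e (hclass₂ e he)]
        apply repVec_congr
        intro u v
        rw [he2 u, he2 v]
        omega
  constructor
  · intro hx
    have h1 : Φ x ∈ Φ '' (COL G lt) := Set.mem_image_of_mem Φ hx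
    rw [COL, Φ.image_convexHull, himg, convexHull_prod] at h1
    exact ⟨h1.1, h1.2⟩
  · rintro ⟨h1, h2⟩
    have h3 : Φ x ∈ Φ '' (COL G lt) := by
      rw [COL, Φ.image_convexHull, himg, convexHull_prod]
      exact ⟨h1, h2⟩
    exact hinj.mem_set_image.mp h3
end

section
/- Let G = (V,E) be a finite simple graph whose complement contains no paw as a subgraph. Then there exist pairwise disjoint subsets S₁, …, S_k of V, each an independent set of G of size 3, and V' = V ∖ (S₁ ∪ … ∪ S_k) with α(G[V']) ≤ 2, such that any two vertices lying in different parts of the partition {S₁, …, S_k, V'} are adjacent in G; that is, G is the complete join of the independent triples S₁, …, S_k and the subgraph G[V']. -/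
open scoped Classical

lemma paw_aux {V : Type*} (H : SimpleGraph V) (a b c d : V)
    (hab : H.Adj a b) (hac : H.Adj a c) (hbc : H.Adj b c) (hcd : H.Adj c d)
    (hda : d ≠ a) (hdb : d ≠ b) :
    ∃ f : Fin 4 → V, Function.Injective f ∧ ∀ x y, pawGraph.Adj x y → H.Adj (f x) (f y) := by
  have hdc : d ≠ c := fun h => H.loopless.irrefl c (h ▸ hcd)
  refine ⟨![a, b, c, d], ?_, ?_⟩
  · intro x y hxy
    fin_cases x <;> fin_cases y <;> simp_all <;>
      first
      | rfl
      | exact absurd hxy hab.ne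
      | exact absurd hxy.symm hab.ne
      | exact absurd hxy hac.ne
      | exact absurd hxy.symm hac.ne
      | exact absurd hxy hbc.ne
      | exact absurd hxy.symm hbc.ne
      | exact absurd hxy.symm hda
      | exact absurd hxy hda
      | exact absurd hxy.symm hdb
      | exact absurd hxy hdb
      | exact absurd hxy.symm hdc
      | exact absurd hxy hdc
  · intro x y hxy
    fin_cases x <;> fin_cases y <;>
      simp only [pawGraph, SimpleGraph.fromEdgeSet_adj, Set.mem_insert_iff,
        Set.mem_singleton_iff] at hxy <;>
      simp_all [Sym2.eq, Sym2.rel_iff'] <;>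
      first
      | exact hab
      | exact hab.symm
      | exact hac
      | exact hac.symm
      | exact hbc
      | exact hbc.symm
      | exact hcd
      | exact hcd.symm


section CJAux
variable {V : Type*} [Fintype V] [DecidableEq V] (G : SimpleGraph V)

/-- Triangle finsets of the complement -/
def IsTri (s : Finset V) : Prop :=
  s.card = 3 ∧ ∀ a ∈ s, ∀ b ∈ s, a ≠ b → Gᶜ.Adj a b

lemma key (hpaw : ¬ ContainsCopy pawGraph Gᶜ) {s : Finset V} (hs : IsTri G s)
    {v d : V} (hv : v ∈ s) (hd : d ∉ s) : ¬ Gᶜ.Adj v d := by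
  intro hadj
  obtain ⟨x, y, z, hxy, hxz, hyz, rfl⟩ := Finset.card_eq_three.mp hs.1
  have adj : ∀ a ∈ ({x, y, z} : Finset V), ∀ b ∈ ({x, y, z} : Finset V), a ≠ b →
      Gᶜ.Adj a b := hs.2
  have hdx : d ≠ x := fun h => hd (by simp [h])
  have hdy : d ≠ y := fun h => hd (by simp [h])
  have hdz : d ≠ z := fun h => hd (by simp [h])
  have mx : x ∈ ({x, y, z} : Finset V) := by simp
  have my : y ∈ ({x, y, z} : Finset V) := by simp
  have mz : z ∈ ({x, y, z} : Finset V) := by simp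
  simp only [Finset.mem_insert, Finset.mem_singleton] at hv
  rcases hv with rfl | rfl | rfl
  · exact hpaw (paw_aux Gᶜ y z v d (adj y my z mz hyz) (adj y my v mx hxy.symm)
      (adj z mz v mx hxz.symm) hadj hdy hdz)
  · exact hpaw (paw_aux Gᶜ x z v d (adj x mx z mz hxz) (adj x mx v my hxy)
      (adj z mz v my hyz.symm) hadj hdx hdz)
  · exact hpaw (paw_aux Gᶜ x y v d (adj x mx y my hxy) (adj x mx v mz hxz)
      (adj y my v mz hyz) hadj hdx hdy)


end CJAux

/-- a graph whose complement has no paw subgraph is the complete join of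
disjoint stable triples and a subgraph with independence number at most 2. -/
theorem statement13 {V : Type*} [Fintype V] [DecidableEq V]
    (G : SimpleGraph V) [DecidableRel G.Adj]
    (hpaw : ¬ ContainsCopy pawGraph Gᶜ) :
    ∃ (k : ℕ) (S : Fin k → Finset V),
      (∀ i j, i ≠ j → Disjoint (S i) (S j)) ∧
      (∀ i, (S i).card = 3) ∧
      (∀ i, ∀ a ∈ S i, ∀ b ∈ S i, ¬ G.Adj a b) ∧
      (∀ s : Set V, s ⊆ {v | ∀ i, v ∉ S i} → IsStableSet G s → s.ncard ≤ 2) ∧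
      (∀ i j, i ≠ j → ∀ a ∈ S i, ∀ b ∈ S j, G.Adj a b) ∧
      (∀ i, ∀ a ∈ S i, ∀ b : V, (∀ j, b ∉ S j) → G.Adj a b) := by
  classical
  set T : Finset (Finset V) := Finset.univ.filter (IsTri G) with hT
  set S : Fin T.card → Finset V := fun i => (T.equivFin.symm i : Finset V) with hS
  have hmem : ∀ i, IsTri G (S i) := fun i =>
    (Finset.mem_filter.mp (T.equivFin.symm i).2).2
  have hinj : ∀ i j, S i = S j → i = j := by
    intro i j h
    have := T.equivFin.symm.injective (Subtype.ext h)
    exact this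
  have hsurj : ∀ s ∈ T, ∃ i, S i = s := by
    intro s hs
    exact ⟨T.equivFin ⟨s, hs⟩, by simp [hS]⟩
  have hdisj : ∀ i j, i ≠ j → Disjoint (S i) (S j) := by
    intro i j hij
    rw [Finset.disjoint_left]
    intro v hvi hvj
    have hne : S i ≠ S j := fun h => hij (hinj i j h)
    have hnsub : ¬ S j ⊆ S i := fun h =>
      hne (Finset.eq_of_subset_of_card_le h (by rw [(hmem i).1, (hmem j).1])).symm
    obtain ⟨d, hdj, hdi⟩ := Finset.not_subset.mp hnsub
    have hdv : v ≠ d := fun h => hdi (h ▸ hvi)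
    exact key G hpaw (hmem i) hvi hdi ((hmem j).2 v hvj d hdj hdv)
  refine ⟨T.card, S, hdisj, fun i => (hmem i).1, ?_, ?_, ?_, ?_⟩
  · intro i a ha b hb hadj
    have hab : a ≠ b := hadj.ne
    exact ((G.compl_adj _ _).mp ((hmem i).2 a ha b hb hab)).2 hadj
  · intro s hsub hst
    by_contra h
    push_neg at h
    obtain ⟨t, hts, htc⟩ := Set.exists_subset_card_eq h
    obtain ⟨x, y, z, hxy, hxz, hyz, rfl⟩ := Set.ncard_eq_three.mp htc
    have hx : x ∈ s := hts (by simp)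
    have hy : y ∈ s := hts (by simp)
    have hz : z ∈ s := hts (by simp)
    have htri : IsTri G ({x, y, z} : Finset V) := by
      constructor
      · rw [Finset.card_insert_of_notMem (by simp [hxy, hxz]),
          Finset.card_insert_of_notMem (by simp [hyz]), Finset.card_singleton]
      · intro a ha b hb hab
        simp only [Finset.mem_insert, Finset.mem_singleton] at ha hb
        have has : a ∈ s := by rcases ha with rfl | rfl | rfl <;> assumption
        have hbs : b ∈ s := by rcases hb with rfl | rfl | rfl <;> assumption
        exact (G.compl_adj _ _).mpr ⟨hab, hst a has b hbs⟩
    obtain ⟨i, hi⟩ := hsurj _ (Finset.mem_filter.mpr ⟨Finset.mem_univ _, htri⟩)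
    exact (hsub hx) i (by rw [hi]; simp)
  · intro i j hij a ha b hb
    have hbi : b ∉ S i := Finset.disjoint_right.mp (hdisj i j hij) hb
    by_contra hadj
    have hab : a ≠ b := fun h => hbi (h ▸ ha)
    exact key G hpaw (hmem i) ha hbi ((G.compl_adj _ _).mpr ⟨hab, hadj⟩)
  · intro i a ha b hb
    have hbi : b ∉ S i := hb i
    by_contra hadj
    have hab : a ≠ b := fun h => hbi (h ▸ ha)
    exact key G hpaw (hmem i) ha hbi ((G.compl_adj _ _).mpr ⟨hab, hadj⟩)
end
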